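/- Let k be a commutative ring which is a ℚ-algebra, λ ∈ k, and ℓ ∈ ℕ. On the free k-module C(λ)_ℓ with basis {d_0, d_1, …, d_ℓ}, the k-linear maps ε with ε(d_0) = 1 and ε(d_n) = 0 for 0 < n ≤ ℓ, and δ with δ(d_n) = Σ_{r+s+t=n} (n!/(r!·s!·t!))·λ^t·(d_{r+t} ⊗ d_{s+t}), make C(λ)_ℓ a coassociative counital k-coalgebra. Moreover, for any associative unital k-algebra A, the k-module isomorphism Hom_k(C(λ)_ℓ, A) → A^{ℓ+1}, f ↦ (f(d_0), …, f(d_ℓ)), carries the convolution unit to (1, 0, …, 0) and the convolution product f ∗ g to the λ-weighted Hurwitz product: (f ∗ g)(d_n) = Σ_{r+s+t=n} (n!/(r!·s!·t!))·λ^t·f(d_{r+t})·g(d_{s+t}). -/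

import Mathlib

open TensorProduct Polynomial
set_option synthInstance.maxHeartbeats 1000000
set_option maxHeartbeats 1000000

/-- The basis vector `d_m` of the free `k`-module on `{d_0, …, d_ℓ}`,
modelled as `Fin (ℓ+1) → k`. -/
def dB (k : Type*) [CommRing k] (l : ℕ) (m : ℕ) : Fin (l + 1) → k :=
  fun i => if (i : ℕ) = m then 1 else 0

/-- The counit of `C(λ)_ℓ`: `ε(d_0) = 1` and `ε(d_n) = 0` for `0 < n ≤ ℓ`. -/
def epsCl (k : Type*) [CommRing k] (l : ℕ) : (Fin (l + 1) → k) →ₗ[k] k :=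
  LinearMap.proj (0 : Fin (l + 1))

/-- The element `∑_{r+s+t=n} (n!/(r!·s!·t!))·λ^t·(d_{r+t} ⊗ d_{s+t})` of
`C(λ)_ℓ ⊗ C(λ)_ℓ`, the triples `(r,s,t)` being enumerated as `r = x.1`, `s = y.1`,
`t = y.2`. -/
noncomputable def wCl (k : Type*) [CommRing k] (l : ℕ) (lam : k) (n : ℕ) :
    (Fin (l + 1) → k) ⊗[k] (Fin (l + 1) → k) :=
  ∑ x ∈ Finset.HasAntidiagonal.antidiagonal n, ∑ y ∈ Finset.HasAntidiagonal.antidiagonal x.2,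
    (n.factorial / (x.1.factorial * y.1.factorial * y.2.factorial)) •
      (lam ^ y.2 • (dB k l (x.1 + y.2) ⊗ₜ[k] dB k l (y.1 + y.2)))

/-- The comultiplication of `C(λ)_ℓ`:
`δ(d_n) = ∑_{r+s+t=n} (n!/(r!·s!·t!))·λ^t·(d_{r+t} ⊗ d_{s+t})`. -/
noncomputable def delCl (k : Type*) [CommRing k] (l : ℕ) (lam : k) :
    (Fin (l + 1) → k) →ₗ[k] (Fin (l + 1) → k) ⊗[k] (Fin (l + 1) → k) :=
  ∑ n : Fin (l + 1), (LinearMap.proj n).smulRight (wCl k l lam (n : ℕ))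

/-- The convolution product `f ∗ g = μ_A ∘ (f ⊗ g) ∘ δ` on `Hom_k(C(λ)_ℓ, A)`. -/
noncomputable def convCl {k A : Type*} [CommRing k] [Ring A] [Algebra k A] (l : ℕ)
    (lam : k) (f g : (Fin (l + 1) → k) →ₗ[k] A) : (Fin (l + 1) → k) →ₗ[k] A :=
  LinearMap.mul' k A ∘ₗ TensorProduct.map f g ∘ₗ delCl k l lam

section Aux
variable {k : Type*} [CommRing k]

noncomputable def piP (k : Type*) [CommRing k] (l : ℕ) : Polynomial k →ₗ[k] (Fin (l + 1) → k) :=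
  LinearMap.pi fun i => Polynomial.lcoeff k (i : ℕ)

lemma piP_X_pow (l j : ℕ) : piP k l (X ^ j : Polynomial k) = dB k l j := by
  funext i
  simp [piP, dB, coeff_X_pow]

lemma dB_eq_single (l : ℕ) (i : Fin (l + 1)) : dB k l (i : ℕ) = Pi.single i (1 : k) := by
  funext j
  simp [dB, Pi.single_apply, Fin.ext_iff, eq_comm]

noncomputable def DP (k : Type*) [CommRing k] (lam : k) :
    Polynomial k →ₐ[k] Polynomial k ⊗[k] Polynomial k :=
  Polynomial.aeval ((X : Polynomial k) ⊗ₜ[k] 1 + 1 ⊗ₜ[k] X + lam • (X ⊗ₜ[k] X))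

lemma multinomial_eq {n r m s t : ℕ} (h1 : r + m = n) (h2 : s + t = m) :
    n.choose r * m.choose s = n.factorial / (r.factorial * s.factorial * t.factorial) := by
  have hrn : r ≤ n := by omega
  have hsm : s ≤ m := by omega
  have e1 : n.choose r * r.factorial * m.factorial = n.factorial := by
    have := Nat.choose_mul_factorial_mul_factorial hrn
    rwa [show n - r = m by omega] at this
  have e2 : m.choose s * s.factorial * t.factorial = m.factorial := by
    have := Nat.choose_mul_factorial_mul_factorial hsm
    rwa [show m - s = t by omega] at this
  have key : n.factorial
      = (n.choose r * m.choose s) * (r.factorial * s.factorial * t.factorial) := by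
    rw [← e1, ← e2]; ring
  rw [key, Nat.mul_div_cancel]
  positivity

lemma DP_X_pow (lam : k) (n : ℕ) :
    DP k lam ((X : Polynomial k) ^ n) =
      ∑ x ∈ Finset.HasAntidiagonal.antidiagonal n, ∑ y ∈ Finset.HasAntidiagonal.antidiagonal x.2,
        (n.choose x.1 * x.2.choose y.1) •
          (lam ^ y.2 •
            (((X : Polynomial k) ^ (x.1 + y.2)) ⊗ₜ[k] ((X : Polynomial k) ^ (y.1 + y.2)))) := by
  rw [map_pow, DP, aeval_X]
  rw [add_assoc, Commute.add_pow' (Commute.all _ _)]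
  refine Finset.sum_congr rfl fun x hx => ?_
  rw [Commute.add_pow' (Commute.all _ _), Finset.mul_sum, Finset.smul_sum]
  refine Finset.sum_congr rfl fun y hy => ?_
  simp only [_root_.smul_pow, Algebra.TensorProduct.tmul_pow, one_pow, mul_smul_comm,
    Algebra.TensorProduct.tmul_mul_tmul, one_mul, mul_one, ← pow_add]
  rw [mul_smul]

lemma QD_X_pow (l : ℕ) (lam : k) (n : ℕ) :
    TensorProduct.map (piP k l) (piP k l) (DP k lam ((X : Polynomial k) ^ n))
      = wCl k l lam n := by
  rw [DP_X_pow, wCl, map_sum]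
  refine Finset.sum_congr rfl fun x hx => ?_
  rw [map_sum]
  refine Finset.sum_congr rfl fun y hy => ?_
  rw [Finset.HasAntidiagonal.mem_antidiagonal] at hx
  rw [Finset.HasAntidiagonal.mem_antidiagonal] at hy
  rw [map_nsmul, map_smul, TensorProduct.map_tmul, piP_X_pow, piP_X_pow,
    multinomial_eq hx hy]

lemma delCl_dB (l : ℕ) (lam : k) (n : ℕ) (hn : n ≤ l) :
    delCl k l lam (dB k l n) = wCl k l lam n := by
  rw [delCl, LinearMap.sum_apply]
  rw [Finset.sum_eq_single (⟨n, by omega⟩ : Fin (l + 1))]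
  · simp [dB]
  · intro m _ hm
    have : (m : ℕ) ≠ n := by
      intro h; exact hm (Fin.ext (by simpa using h))
    simp [dB, this, LinearMap.smulRight_apply]
  · simp

end Aux

section Aux2
variable {k : Type*} [CommRing k]

lemma rTensor_algMap (lam : k) :
    LinearMap.rTensor (Polynomial k) (DP k lam).toLinearMap
      = (Algebra.TensorProduct.map (DP k lam) (AlgHom.id k (Polynomial k))).toLinearMap := by
  apply TensorProduct.ext'
  intro p q
  simp

lemma lTensor_algMap (lam : k) :
    LinearMap.lTensor (Polynomial k) (DP k lam).toLinearMap
      = (Algebra.TensorProduct.map (AlgHom.id k (Polynomial k)) (DP k lam)).toLinearMap := by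
  apply TensorProduct.ext'
  intro p q
  simp

set_option synthInstance.maxHeartbeats 1000000 in
set_option maxHeartbeats 1000000 in
lemma coassocP (lam : k) (p : Polynomial k) :
    TensorProduct.assoc k (Polynomial k) (Polynomial k) (Polynomial k)
      (LinearMap.rTensor (Polynomial k) (DP k lam).toLinearMap (DP k lam p))
      = LinearMap.lTensor (Polynomial k) (DP k lam).toLinearMap (DP k lam p) := by
  have key : ((Algebra.TensorProduct.assoc k k k (Polynomial k) (Polynomial k)
        (Polynomial k)).toAlgHom.comp
        ((Algebra.TensorProduct.map (DP k lam) (AlgHom.id k (Polynomial k))).comp (DP k lam)))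
      = (Algebra.TensorProduct.map (AlgHom.id k (Polynomial k)) (DP k lam)).comp (DP k lam) := by
    apply Polynomial.algHom_ext
    simp only [AlgHom.coe_comp, AlgEquiv.toAlgHom_eq_coe, AlgHom.coe_coe, Function.comp_apply,
      DP, aeval_X, map_add, map_smul, Algebra.TensorProduct.map_tmul, AlgHom.coe_id, id_eq,
      map_one, Algebra.TensorProduct.one_def, tmul_add, add_tmul, ← smul_tmul', tmul_smul,
      smul_add, smul_smul, Algebra.TensorProduct.assoc_tmul]
    simp only [AlgEquiv.coe_algHom, Algebra.TensorProduct.assoc_tmul]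
    module
  have := DFunLike.congr_fun key p
  simp only [AlgHom.coe_comp, AlgEquiv.toAlgHom_eq_coe, AlgHom.coe_coe, Function.comp_apply]
    at this
  rw [rTensor_algMap, lTensor_algMap]
  rw [← TensorProduct.AlgebraTensorModule.assoc_eq, ← Algebra.TensorProduct.assoc_toLinearEquiv]
  exact this

end Aux2

section Aux3
variable {k : Type*} [CommRing k]

lemma rTensor_epsAlg :
    LinearMap.rTensor (Polynomial k) (Polynomial.aeval (0 : k) : Polynomial k →ₐ[k] k).toLinearMap
      = (Algebra.TensorProduct.map (Polynomial.aeval (0 : k))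
          (AlgHom.id k (Polynomial k))).toLinearMap := by
  apply TensorProduct.ext'
  intro p q
  simp

lemma lTensor_epsAlg :
    LinearMap.lTensor (Polynomial k) (Polynomial.aeval (0 : k) : Polynomial k →ₐ[k] k).toLinearMap
      = (Algebra.TensorProduct.map (AlgHom.id k (Polynomial k))
          (Polynomial.aeval (0 : k))).toLinearMap := by
  apply TensorProduct.ext'
  intro p q
  simp

lemma counitP_left (lam : k) (p : Polynomial k) :
    TensorProduct.lid k (Polynomial k)
      (LinearMap.rTensor (Polynomial k)
        (Polynomial.aeval (0 : k) : Polynomial k →ₐ[k] k).toLinearMap (DP k lam p)) = p := by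
  have key : ((Algebra.TensorProduct.lid k (Polynomial k)).toAlgHom.comp
      ((Algebra.TensorProduct.map (Polynomial.aeval (0 : k))
        (AlgHom.id k (Polynomial k))).comp (DP k lam))) = AlgHom.id k (Polynomial k) := by
    apply Polynomial.algHom_ext
    simp [DP, Algebra.TensorProduct.one_def, tmul_add, map_add, map_smul, zero_tmul, smul_zero]
  have := DFunLike.congr_fun key p
  simp only [AlgHom.coe_comp, AlgEquiv.toAlgHom_eq_coe, AlgHom.coe_coe, Function.comp_apply,
    AlgHom.coe_id, id_eq] at this
  rw [rTensor_epsAlg]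
  rw [← Algebra.TensorProduct.lid_toLinearEquiv]
  exact this

lemma counitP_right (lam : k) (p : Polynomial k) :
    TensorProduct.rid k (Polynomial k)
      (LinearMap.lTensor (Polynomial k)
        (Polynomial.aeval (0 : k) : Polynomial k →ₐ[k] k).toLinearMap (DP k lam p)) = p := by
  have key : ((Algebra.TensorProduct.rid k k (Polynomial k)).toAlgHom.comp
      ((Algebra.TensorProduct.map (AlgHom.id k (Polynomial k))
        (Polynomial.aeval (0 : k))).comp (DP k lam))) = AlgHom.id k (Polynomial k) := by
    apply Polynomial.algHom_ext
    simp [DP, Algebra.TensorProduct.one_def, add_tmul, map_add, map_smul, tmul_zero, smul_zero]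
  have := DFunLike.congr_fun key p
  simp only [AlgHom.coe_comp, AlgEquiv.toAlgHom_eq_coe, AlgHom.coe_coe, Function.comp_apply,
    AlgHom.coe_id, id_eq] at this
  rw [lTensor_epsAlg]
  rw [← TensorProduct.AlgebraTensorModule.rid_eq_rid k (Polynomial k),
    ← Algebra.TensorProduct.rid_toLinearEquiv]
  exact this

end Aux3

section Aux4
variable {k : Type*} [CommRing k]

lemma assoc_nat (l : ℕ) (f g h : Polynomial k →ₗ[k] (Fin (l + 1) → k)) :
    (TensorProduct.assoc k (Fin (l + 1) → k) (Fin (l + 1) → k) (Fin (l + 1) → k)).toLinearMap ∘ₗ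
        TensorProduct.map (TensorProduct.map f g) h
      = TensorProduct.map f (TensorProduct.map g h) ∘ₗ
        (TensorProduct.assoc k (Polynomial k) (Polynomial k) (Polynomial k)).toLinearMap := by
  apply TensorProduct.ext_threefold
  intro a b c
  simp

lemma lid_nat (l : ℕ) (f : Polynomial k →ₗ[k] (Fin (l + 1) → k)) :
    (TensorProduct.lid k (Fin (l + 1) → k)).toLinearMap ∘ₗ LinearMap.lTensor k f
      = f ∘ₗ (TensorProduct.lid k (Polynomial k)).toLinearMap := by
  apply TensorProduct.ext'
  intro r p
  simp

lemma rid_nat (l : ℕ) (f : Polynomial k →ₗ[k] (Fin (l + 1) → k)) :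
    (TensorProduct.rid k (Fin (l + 1) → k)).toLinearMap ∘ₗ LinearMap.rTensor k f
      = f ∘ₗ (TensorProduct.rid k (Polynomial k)).toLinearMap := by
  apply TensorProduct.ext'
  intro p r
  simp

lemma stepA (l : ℕ) (lam : k) (n : ℕ) (hn : n ≤ l) :
    LinearMap.rTensor (Fin (l + 1) → k) (delCl k l lam) (wCl k l lam n)
      = TensorProduct.map (TensorProduct.map (piP k l) (piP k l)) (piP k l)
          (LinearMap.rTensor (Polynomial k) (DP k lam).toLinearMap
            (DP k lam ((X : Polynomial k) ^ n))) := by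
  rw [DP_X_pow, wCl]
  simp only [map_sum, map_nsmul, map_smul]
  refine Finset.sum_congr rfl fun x hx => Finset.sum_congr rfl fun y hy => ?_
  rw [Finset.HasAntidiagonal.mem_antidiagonal] at hx hy
  rw [LinearMap.rTensor_tmul, LinearMap.rTensor_tmul, TensorProduct.map_tmul,
    AlgHom.toLinearMap_apply, QD_X_pow, piP_X_pow, delCl_dB _ _ _ (by omega),
    multinomial_eq hx hy]

lemma stepB (l : ℕ) (lam : k) (n : ℕ) (hn : n ≤ l) :
    LinearMap.lTensor (Fin (l + 1) → k) (delCl k l lam) (wCl k l lam n)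
      = TensorProduct.map (piP k l) (TensorProduct.map (piP k l) (piP k l))
          (LinearMap.lTensor (Polynomial k) (DP k lam).toLinearMap
            (DP k lam ((X : Polynomial k) ^ n))) := by
  rw [DP_X_pow, wCl]
  simp only [map_sum, map_nsmul, map_smul]
  refine Finset.sum_congr rfl fun x hx => Finset.sum_congr rfl fun y hy => ?_
  rw [Finset.HasAntidiagonal.mem_antidiagonal] at hx hy
  rw [LinearMap.lTensor_tmul, LinearMap.lTensor_tmul, TensorProduct.map_tmul,
    AlgHom.toLinearMap_apply, QD_X_pow, piP_X_pow, delCl_dB _ _ _ (by omega),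
    multinomial_eq hx hy]

lemma coassoc_dB (l : ℕ) (lam : k) (n : ℕ) (hn : n ≤ l) :
    TensorProduct.assoc k (Fin (l + 1) → k) (Fin (l + 1) → k) (Fin (l + 1) → k)
        (LinearMap.rTensor (Fin (l + 1) → k) (delCl k l lam) (wCl k l lam n))
      = LinearMap.lTensor (Fin (l + 1) → k) (delCl k l lam) (wCl k l lam n) := by
  rw [stepA l lam n hn, stepB l lam n hn, ← coassocP lam ((X : Polynomial k) ^ n)]
  have := DFunLike.congr_fun (assoc_nat l (piP k l) (piP k l) (piP k l))
    (LinearMap.rTensor (Polynomial k) (DP k lam).toLinearMap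
      (DP k lam ((X : Polynomial k) ^ n)))
  simpa using this

lemma epsMP (l j : ℕ) : epsCl k l (dB k l j) = Polynomial.aeval (0 : k) ((X : Polynomial k) ^ j) := by
  simp [epsCl, dB, zero_pow_eq, eq_comm]

lemma stepC (l : ℕ) (lam : k) (n : ℕ) :
    LinearMap.rTensor (Fin (l + 1) → k) (epsCl k l) (wCl k l lam n)
      = TensorProduct.map (Polynomial.aeval (0 : k) : Polynomial k →ₐ[k] k).toLinearMap (piP k l)
          (DP k lam ((X : Polynomial k) ^ n)) := by
  rw [DP_X_pow, wCl]
  simp only [map_sum, map_nsmul, map_smul]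
  refine Finset.sum_congr rfl fun x hx => Finset.sum_congr rfl fun y hy => ?_
  rw [Finset.HasAntidiagonal.mem_antidiagonal] at hx hy
  rw [LinearMap.rTensor_tmul, TensorProduct.map_tmul, AlgHom.toLinearMap_apply, piP_X_pow,
    epsMP, multinomial_eq hx hy]

lemma stepD (l : ℕ) (lam : k) (n : ℕ) :
    LinearMap.lTensor (Fin (l + 1) → k) (epsCl k l) (wCl k l lam n)
      = TensorProduct.map (piP k l) (Polynomial.aeval (0 : k) : Polynomial k →ₐ[k] k).toLinearMap
          (DP k lam ((X : Polynomial k) ^ n)) := by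
  rw [DP_X_pow, wCl]
  simp only [map_sum, map_nsmul, map_smul]
  refine Finset.sum_congr rfl fun x hx => Finset.sum_congr rfl fun y hy => ?_
  rw [Finset.HasAntidiagonal.mem_antidiagonal] at hx hy
  rw [LinearMap.lTensor_tmul, TensorProduct.map_tmul, AlgHom.toLinearMap_apply, piP_X_pow,
    epsMP, multinomial_eq hx hy]

lemma counit_left_dB (l : ℕ) (lam : k) (n : ℕ) :
    TensorProduct.lid k (Fin (l + 1) → k)
        (LinearMap.rTensor (Fin (l + 1) → k) (epsCl k l) (wCl k l lam n)) = dB k l n := by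
  rw [stepC l lam n, ← LinearMap.lTensor_comp_rTensor]
  have := DFunLike.congr_fun (lid_nat l (piP k l))
    (LinearMap.rTensor (Polynomial k)
      (Polynomial.aeval (0 : k) : Polynomial k →ₐ[k] k).toLinearMap
      (DP k lam ((X : Polynomial k) ^ n)))
  simp only [LinearMap.coe_comp, Function.comp_apply, LinearEquiv.coe_coe] at this ⊢
  rw [this, counitP_left, piP_X_pow]

lemma counit_right_dB (l : ℕ) (lam : k) (n : ℕ) :
    TensorProduct.rid k (Fin (l + 1) → k)
        (LinearMap.lTensor (Fin (l + 1) → k) (epsCl k l) (wCl k l lam n)) = dB k l n := by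
  rw [stepD l lam n, ← LinearMap.rTensor_comp_lTensor]
  have := DFunLike.congr_fun (rid_nat l (piP k l))
    (LinearMap.lTensor (Polynomial k)
      (Polynomial.aeval (0 : k) : Polynomial k →ₐ[k] k).toLinearMap
      (DP k lam ((X : Polynomial k) ^ n)))
  simp only [LinearMap.coe_comp, Function.comp_apply, LinearEquiv.coe_coe] at this ⊢
  rw [this, counitP_right, piP_X_pow]

end Aux4


/-- On the free `k`-module `C(λ)_ℓ` with basis `{d_0, …, d_ℓ}`, the
`k`-linear maps `ε` (with `ε(d_0) = 1` and `ε(d_n) = 0` for `0 < n ≤ ℓ`) and `δ` (with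
`δ(d_n) = ∑_{r+s+t=n} (n!/(r!·s!·t!))·λ^t·(d_{r+t} ⊗ d_{s+t})`) make `C(λ)_ℓ` a
coassociative counital `k`-coalgebra.  Moreover, for any associative unital `k`-algebra
`A`, under `f ↦ (f(d_0), …, f(d_ℓ))` the convolution unit is `(1, 0, …, 0)` and the
convolution product is the `λ`-weighted Hurwitz product. -/
theorem stmt18 {k A : Type*} [CommRing k] [Algebra ℚ k] [Ring A] [Algebra k A]
    (l : ℕ) (lam : k) :
    -- the stated values of ε and δ on the basis
    (epsCl k l (dB k l 0) = 1) ∧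
    (∀ n : ℕ, 0 < n → n ≤ l → epsCl k l (dB k l n) = 0) ∧
    (∀ n : ℕ, n ≤ l → delCl k l lam (dB k l n) = wCl k l lam n) ∧
    -- coassociativity
    (∀ v : Fin (l + 1) → k,
      TensorProduct.assoc k _ _ _
          (LinearMap.rTensor (Fin (l + 1) → k) (delCl k l lam) (delCl k l lam v)) =
        LinearMap.lTensor (Fin (l + 1) → k) (delCl k l lam) (delCl k l lam v)) ∧
    -- counit laws
    (∀ v : Fin (l + 1) → k,
      TensorProduct.lid k (Fin (l + 1) → k)
        (LinearMap.rTensor (Fin (l + 1) → k) (epsCl k l) (delCl k l lam v)) = v) ∧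
    (∀ v : Fin (l + 1) → k,
      TensorProduct.rid k (Fin (l + 1) → k)
        (LinearMap.lTensor (Fin (l + 1) → k) (epsCl k l) (delCl k l lam v)) = v) ∧
    -- the convolution unit corresponds to (1, 0, …, 0)
    (algebraMap k A (epsCl k l (dB k l 0)) = 1) ∧
    (∀ n : ℕ, 0 < n → n ≤ l → algebraMap k A (epsCl k l (dB k l n)) = 0) ∧
    -- the convolution product is the λ-weighted Hurwitz product
    (∀ f g : (Fin (l + 1) → k) →ₗ[k] A, ∀ n : ℕ, n ≤ l →
      convCl l lam f g (dB k l n) =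
        ∑ x ∈ Finset.HasAntidiagonal.antidiagonal n, ∑ y ∈ Finset.HasAntidiagonal.antidiagonal x.2,
          (n.factorial / (x.1.factorial * y.1.factorial * y.2.factorial)) •
            (lam ^ y.2 • (f (dB k l (x.1 + y.2)) * g (dB k l (y.1 + y.2))))) := by
  have heps0 : epsCl k l (dB k l 0) = 1 := by simp [epsCl, dB]
  have hepsn : ∀ n : ℕ, 0 < n → n ≤ l → epsCl k l (dB k l n) = 0 := by
    intro n h1 _
    simp [epsCl, dB, h1.ne]
  refine ⟨heps0, hepsn, fun n hn => delCl_dB l lam n hn, ?_, ?_, ?_, ?_, ?_, ?_⟩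
  · -- coassociativity
    have heq : (TensorProduct.assoc k (Fin (l + 1) → k) (Fin (l + 1) → k)
          (Fin (l + 1) → k)).toLinearMap ∘ₗ
          (LinearMap.rTensor (Fin (l + 1) → k) (delCl k l lam) ∘ₗ delCl k l lam)
        = LinearMap.lTensor (Fin (l + 1) → k) (delCl k l lam) ∘ₗ delCl k l lam := by
      apply Module.Basis.ext (Pi.basisFun k (Fin (l + 1)))
      intro i
      simp only [LinearMap.coe_comp, Function.comp_apply, LinearEquiv.coe_coe,
        Pi.basisFun_apply]
      rw [← dB_eq_single l i, delCl_dB l lam i (Fin.is_le i)]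
      exact coassoc_dB l lam i (Fin.is_le i)
    intro v
    have := DFunLike.congr_fun heq v
    simpa using this
  · -- left counit
    have heq : (TensorProduct.lid k (Fin (l + 1) → k)).toLinearMap ∘ₗ
          (LinearMap.rTensor (Fin (l + 1) → k) (epsCl k l) ∘ₗ delCl k l lam)
        = LinearMap.id := by
      apply Module.Basis.ext (Pi.basisFun k (Fin (l + 1)))
      intro i
      simp only [LinearMap.coe_comp, Function.comp_apply, LinearEquiv.coe_coe,
        Pi.basisFun_apply, LinearMap.id_coe, id_eq]
      rw [← dB_eq_single l i, delCl_dB l lam i (Fin.is_le i)]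
      exact counit_left_dB l lam i
    intro v
    have := DFunLike.congr_fun heq v
    simpa using this
  · -- right counit
    have heq : (TensorProduct.rid k (Fin (l + 1) → k)).toLinearMap ∘ₗ
          (LinearMap.lTensor (Fin (l + 1) → k) (epsCl k l) ∘ₗ delCl k l lam)
        = LinearMap.id := by
      apply Module.Basis.ext (Pi.basisFun k (Fin (l + 1)))
      intro i
      simp only [LinearMap.coe_comp, Function.comp_apply, LinearEquiv.coe_coe,
        Pi.basisFun_apply, LinearMap.id_coe, id_eq]
      rw [← dB_eq_single l i, delCl_dB l lam i (Fin.is_le i)]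
      exact counit_right_dB l lam i
    intro v
    have := DFunLike.congr_fun heq v
    simpa using this
  · rw [heps0, map_one]
  · intro n h1 h2
    rw [hepsn n h1 h2, map_zero]
  · intro f g n hn
    rw [convCl, LinearMap.comp_apply, LinearMap.comp_apply, delCl_dB l lam n hn, wCl]
    simp only [map_sum, map_nsmul, map_smul, TensorProduct.map_tmul, LinearMap.mul'_apply]
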